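/- Let P be a parametric system in K[U][X] with a line {C_{l,1},...,C_{l,k}} of a Wu's decomposition, with corresponding systems {P_1,...,P_k} where P_1 = P and P_i = P_{i-1} ∪ C_{l,i-1} ∪ {I_{C_{l,i-1}}}. Then for any a ∈ K̄^d not in V^U(C_{l,k}), for each i (1 ≤ i ≤ k) there exists a polynomial p_i ∈ P_i such that p_i(a) is not identically zero. -/

import Mathlib

open MvPolynomial

noncomputable section

variable {K : Type*} [Field K] {d n : ℕ}

/-- Specialization of parameters: `K[U][X] → K̄[X]` substituting `a` for `U`. -/
def specAt (a : Fin d → AlgebraicClosure K) :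
    MvPolynomial (Fin n) (MvPolynomial (Fin d) K) →+*
      MvPolynomial (Fin n) (AlgebraicClosure K) :=
  MvPolynomial.map ((MvPolynomial.aeval a).toRingHom)

/-- Common zero set in `K̄ⁿ` of the specializations at `a` of a set of polynomials. -/
def zeroSetAt (a : Fin d → AlgebraicClosure K)
    (S : Set (MvPolynomial (Fin n) (MvPolynomial (Fin d) K))) :
    Set (Fin n → AlgebraicClosure K) :=
  {x | ∀ f ∈ S, MvPolynomial.eval x (specAt a f) = 0}

variable {A : Type*} [CommRing A]

/-- The main (largest) variable of a multivariate polynomial (defaults to `0`). -/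
def mainVar [NeZero n] (F : MvPolynomial (Fin n) A) : Fin n := WithBot.unbotD 0 F.vars.max

/-- The initial of `F`: its leading coefficient w.r.t. its main variable. -/
def initial [NeZero n] (F : MvPolynomial (Fin n) A) : MvPolynomial (Fin n) A :=
  ∑ m ∈ F.support.filter (fun m => m (mainVar F) = F.degreeOf (mainVar F)),
    MvPolynomial.monomial (m - Finsupp.single (mainVar F) (F.degreeOf (mainVar F))) (F.coeff m)

/-- `F` viewed as a univariate polynomial in the variable `j`. -/
def toUniv (j : Fin n) (F : MvPolynomial (Fin n) A) :
    Polynomial (MvPolynomial (Fin n) A) :=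
  ∑ m ∈ F.support,
    Polynomial.monomial (m j) (MvPolynomial.monomial (m - Finsupp.single j (m j)) (F.coeff m))

/-- The Sylvester matrix of two univariate polynomials. -/
def sylvester (f g : Polynomial A) :
    Matrix (Fin (f.natDegree + g.natDegree)) (Fin (f.natDegree + g.natDegree)) A :=
  fun i j =>
    if (i : ℕ) < g.natDegree then
      (if (i : ℕ) ≤ (j : ℕ) ∧ (j : ℕ) ≤ (i : ℕ) + f.natDegree then
        f.coeff (f.natDegree + i - j) else 0)
    else
      (if (i : ℕ) - g.natDegree ≤ (j : ℕ) ∧ (j : ℕ) ≤ ((i : ℕ) - g.natDegree) + g.natDegree then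
        g.coeff (g.natDegree + ((i : ℕ) - g.natDegree) - j) else 0)

/-- The resultant of two univariate polynomials (Sylvester determinant). -/
def resultant (f g : Polynomial A) : A := (sylvester f g).det

/-- `res(F, P)`: resultant w.r.t. the main variable of `P`. -/
def res1 [NeZero n] (F P : MvPolynomial (Fin n) A) : MvPolynomial (Fin n) A :=
  resultant (toUniv (mainVar P) F) (toUniv (mainVar P) P)

/-- Successive resultant of `F` w.r.t. the list `l` of polynomials. -/
def sres [NeZero n] (F : MvPolynomial (Fin n) A) (l : List (MvPolynomial (Fin n) A)) :
    MvPolynomial (Fin n) A :=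
  l.foldl res1 F

/-- A triangular set: the main variables are strictly increasing. -/
def IsTriangular [NeZero n] {r : ℕ} (T : Fin r → MvPolynomial (Fin n) A) : Prop :=
  (∀ i, (T i).vars.Nonempty) ∧ StrictMono (fun i => mainVar (T i))

/-- A regular chain. -/
def IsRegularChain [NeZero n] {r : ℕ} (T : Fin r → MvPolynomial (Fin n) A) : Prop :=
  IsTriangular T ∧ (∀ i : Fin r, (i : ℕ) = 0 → initial (T i) ≠ 0) ∧
    ∀ i : Fin r, 0 < (i : ℕ) →
      sres (initial (T i)) ((List.ofFn T).take i).reverse ≠ 0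
lemma specAt_initial_eq_zero [NeZero n] (a : Fin d → AlgebraicClosure K)
    (p : MvPolynomial (Fin n) (MvPolynomial (Fin d) K))
    (h : specAt a p = 0) : specAt a (initial p) = 0 := by
  unfold initial
  unfold specAt at *
  rw [map_sum]
  refine Finset.sum_eq_zero fun m _ => ?_
  rw [MvPolynomial.map_monomial]
  have hz : (MvPolynomial.aeval a).toRingHom (p.coeff m) = 0 := by
    have := congrArg (MvPolynomial.coeff m) h
    rwa [MvPolynomial.coeff_map, MvPolynomial.coeff_zero] at this
  rw [hz, MvPolynomial.monomial_zero]

/-- Lemma wusinit: Along a line `C_{l,1},...,C_{l,k}` of a Wu's decomposition of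
`P = P_1` with corresponding systems `P_i` (`P_{i+1} = P_i ∪ C_{l,i} ∪ {I_{C_{l,i}}}`), ending at a
contradictory ascending chain `{C b}`, every `a ∈ K̄^d` outside `V^U({C b})` admits, for each
`i ≤ k`, some `p_i ∈ P_i` whose specialization `p_i(a)` is not identically zero. -/
theorem stmt7 [NeZero n] (k : ℕ) (hk : 0 < k)
    (P : ℕ → Set (MvPolynomial (Fin n) (MvPolynomial (Fin d) K)))
    (C : ℕ → Finset (MvPolynomial (Fin n) (MvPolynomial (Fin d) K)))
    (c : ℕ → MvPolynomial (Fin n) (MvPolynomial (Fin d) K))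
    (hchar : ∀ i, i + 1 < k → ((C i : Finset (MvPolynomial (Fin n) (MvPolynomial (Fin d) K))) : Set (MvPolynomial (Fin n) (MvPolynomial (Fin d) K))) ⊆ (Ideal.span (P i) : Set (MvPolynomial (Fin n) (MvPolynomial (Fin d) K))))
    (hc : ∀ i, i + 1 < k → c i ∈ C i)
    (hstep : ∀ i, i + 1 < k → P (i + 1) = P i ∪ ↑(C i) ∪ {initial (c i)})
    (b : MvPolynomial (Fin d) K) (hb : b ≠ 0)
    (hlastC : C (k - 1) = {MvPolynomial.C b})
    (hlast : MvPolynomial.C b ∈ Ideal.span (P (k - 1)))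
    (a : Fin d → AlgebraicClosure K) (ha : MvPolynomial.aeval a b ≠ 0) :
    ∀ i < k, ∃ p ∈ P i, specAt a p ≠ 0 := by
  -- abbreviation for the "all specializations vanish" predicate
  set φ := specAt (K := K) (n := n) a with hφ
  have hspan : ∀ i, (∀ p ∈ P i, φ p = 0) → ∀ q ∈ Ideal.span (P i), φ q = 0 := by
    intro i h q hq
    have hsub : P i ⊆ (RingHom.ker φ : Ideal _) := fun p hp => h p hp
    exact (Ideal.span_le.mpr hsub) hq
  -- the last system has a nonvanishing element
  have hQlast : ∃ p ∈ P (k - 1), φ p ≠ 0 := by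
    by_contra hcon
    push_neg at hcon
    have : φ (MvPolynomial.C b) = 0 := hspan _ hcon _ hlast
    rw [hφ] at this
    unfold specAt at this
    rw [MvPolynomial.map_C] at this
    simp only [AlgHom.toRingHom_eq_coe, RingHom.coe_coe] at this
    exact ha (by simpa using (MvPolynomial.C_injective _ _) (this.trans (MvPolynomial.C_0).symm))
  -- descending step
  have hdesc : ∀ i, i + 1 < k → (∃ p ∈ P (i + 1), φ p ≠ 0) → ∃ p ∈ P i, φ p ≠ 0 := by
    intro i hik hnext
    by_contra hcon
    push_neg at hcon
    obtain ⟨p, hp, hpne⟩ := hnext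
    rw [hstep i hik] at hp
    rcases hp with (hp | hp) | hp
    · exact hpne (hcon p hp)
    · exact hpne (hspan i hcon p (hchar i hik hp))
    · rcases hp with rfl
      have hci : φ (c i) = 0 := hspan i hcon _ (hchar i hik (hc i hik))
      exact hpne (specAt_initial_eq_zero a _ hci)
  -- downward induction
  have key : ∀ j, j ≤ k - 1 → ∃ p ∈ P (k - 1 - j), φ p ≠ 0 := by
    intro j
    induction j with
    | zero => intro _; simpa using hQlast
    | succ j ih =>
      intro hj
      have h1 : k - 1 - (j + 1) + 1 = k - 1 - j := by omega
      have h2 : k - 1 - (j + 1) + 1 < k := by omega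
      refine hdesc _ h2 ?_
      rw [h1]
      exact ih (by omega)
  intro i hi
  have := key (k - 1 - i) (by omega)
  have heq : k - 1 - (k - 1 - i) = i := by omega
  rwa [heq] at this

end
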